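/- Let f : I → ℝ be convex on (a,b) and on (b,c) for a < b < c, and differentiable at b. Then f is convex on (a,c). -/
import Mathlib


open Set Filter Topology

section Aux

variable {f : ℝ → ℝ} {a b c : ℝ}

private lemma tendsto_slope_left (hfb : ContinuousAt f b) {y : ℝ} (hy : y < b) :
    Tendsto (fun v => (f v - f y) / (v - y)) (𝓝[<] b) (𝓝 ((f b - f y) / (b - y))) := by
  apply Tendsto.div
  · exact (hfb.tendsto.mono_left nhdsWithin_le_nhds).sub tendsto_const_nhds
  · exact (tendsto_id.mono_left nhdsWithin_le_nhds).sub tendsto_const_nhds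
  · exact sub_ne_zero_of_ne hy.ne'

private lemma tendsto_slope_right (hfb : ContinuousAt f b) {y : ℝ} (hy : b < y) :
    Tendsto (fun u => (f y - f u) / (y - u)) (𝓝[>] b) (𝓝 ((f y - f b) / (y - b))) := by
  apply Tendsto.div
  · exact tendsto_const_nhds.sub (hfb.tendsto.mono_left nhdsWithin_le_nhds)
  · exact tendsto_const_nhds.sub (tendsto_id.mono_left nhdsWithin_le_nhds)
  · exact sub_ne_zero_of_ne hy.ne'

/-- for `a < x < y < b`, slope(x,y) ≤ slope(y,b). -/
private lemma slope_le_slope_b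
    (h1 : ConvexOn ℝ (Set.Ioo a b) f) (hfb : ContinuousAt f b)
    {x y : ℝ} (hx : x ∈ Set.Ioo a b) (hxy : x < y) (hyb : y < b) :
    (f y - f x) / (y - x) ≤ (f b - f y) / (b - y) := by
  refine ge_of_tendsto (tendsto_slope_left hfb hyb) ?_
  filter_upwards [Ioo_mem_nhdsLT_of_mem (show b ∈ Ioc y b from ⟨hyb, le_refl b⟩)] with v hv
  exact h1.slope_mono_adjacent hx ⟨lt_trans hx.1 (lt_trans hxy hv.1), hv.2⟩ hxy hv.1

/-- for `b < y < z < c`, slope(b,y) ≤ slope(y,z). -/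
private lemma slope_b_le_slope
    (h2 : ConvexOn ℝ (Set.Ioo b c) f) (hfb : ContinuousAt f b)
    {y z : ℝ} (hz : z ∈ Set.Ioo b c) (hyz : y < z) (hby : b < y) :
    (f y - f b) / (y - b) ≤ (f z - f y) / (z - y) := by
  refine le_of_tendsto (tendsto_slope_right hfb hby) ?_
  filter_upwards [Ioo_mem_nhdsGT_of_mem (show b ∈ Ico b y from ⟨le_refl b, hby⟩)] with u hu
  exact h2.slope_mono_adjacent ⟨hu.1, lt_trans hu.2 (lt_trans hyz hz.2)⟩ hz hu.2 hyz

/-- for `a < x < b`, slope(x,b) ≤ f'(b). -/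
private lemma slope_le_deriv (hab : a < b)
    (h1 : ConvexOn ℝ (Set.Ioo a b) f) (hb : DifferentiableAt ℝ f b)
    {x : ℝ} (hx : x ∈ Set.Ioo a b) :
    (f b - f x) / (b - x) ≤ deriv f b := by
  have hslope : Tendsto (slope f b) (𝓝[≠] b) (𝓝 (deriv f b)) :=
    hasDerivAt_iff_tendsto_slope.mp hb.hasDerivAt
  have hslope' : Tendsto (fun u => (f b - f u) / (b - u)) (𝓝[<] b) (𝓝 (deriv f b)) := by
    refine (hslope.mono_left (nhdsWithin_mono _ fun u hu => ne_of_lt hu)).congr fun u => ?_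
    rw [slope_def_field, ← neg_sub (f u), ← neg_sub u, neg_div_neg_eq]
  refine le_of_tendsto_of_tendsto (tendsto_slope_left hb.continuousAt hx.2) hslope' ?_
  filter_upwards [Ioo_mem_nhdsLT_of_mem (show b ∈ Ioc x b from ⟨hx.2, le_refl b⟩)] with u hu
  exact slope_le_slope_b h1 hb.continuousAt hx hu.1 hu.2

/-- for `b < z < c`, f'(b) ≤ slope(b,z). -/
private lemma deriv_le_slope (hbc : b < c)
    (h2 : ConvexOn ℝ (Set.Ioo b c) f) (hb : DifferentiableAt ℝ f b)
    {z : ℝ} (hz : z ∈ Set.Ioo b c) :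
    deriv f b ≤ (f z - f b) / (z - b) := by
  have hslope : Tendsto (slope f b) (𝓝[≠] b) (𝓝 (deriv f b)) :=
    hasDerivAt_iff_tendsto_slope.mp hb.hasDerivAt
  have hslope' : Tendsto (fun u => (f u - f b) / (u - b)) (𝓝[>] b) (𝓝 (deriv f b)) := by
    refine (hslope.mono_left (nhdsWithin_mono _ fun u hu => ne_of_gt hu)).congr fun u => ?_
    rw [slope_def_field]
  refine le_of_tendsto hslope' ?_
  filter_upwards [Ioo_mem_nhdsGT_of_mem (show b ∈ Ico b z from ⟨le_refl b, hz.1⟩)] with u hu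
  obtain ⟨hu1, hu2⟩ := hu
  have h := slope_b_le_slope h2 hb.continuousAt hz hu2 hu1
  rw [div_le_div_iff₀ (by linarith) (by linarith)] at h ⊢
  nlinarith

private lemma slope_trans_left {x y z fx fy fz : ℝ} (hxy : x < y) (hyz : y < z)
    (h : (fy - fx) / (y - x) ≤ (fz - fy) / (z - y)) :
    (fy - fx) / (y - x) ≤ (fz - fx) / (z - x) := by
  rw [div_le_div_iff₀ (by linarith) (by linarith)] at h ⊢
  nlinarith

private lemma slope_trans_right {x y z fx fy fz : ℝ} (hxy : x < y) (hyz : y < z)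
    (h : (fy - fx) / (y - x) ≤ (fz - fy) / (z - y)) :
    (fz - fx) / (z - x) ≤ (fz - fy) / (z - y) := by
  rw [div_le_div_iff₀ (by linarith) (by linarith)] at h ⊢
  nlinarith

end Aux

theorem convexOn_glue_of_differentiableAt
    (f : ℝ → ℝ) (a b c : ℝ) (hab : a < b) (hbc : b < c)
    (h1 : ConvexOn ℝ (Set.Ioo a b) f) (h2 : ConvexOn ℝ (Set.Ioo b c) f)
    (hb : DifferentiableAt ℝ f b) :
    ConvexOn ℝ (Set.Ioo a c) f := by
  apply convexOn_of_slope_mono_adjacent (convex_Ioo a c)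
  intro x y z hx hz hxy hyz
  obtain ⟨hx1, hx2⟩ := hx
  obtain ⟨hz1, hz2⟩ := hz
  rcases lt_trichotomy y b with hyb | hyb | hby
  · rcases lt_trichotomy z b with hzb | hzb | hbz
    · exact h1.slope_mono_adjacent ⟨hx1, by linarith⟩ ⟨by linarith, hzb⟩ hxy hyz
    · subst hzb; exact slope_le_slope_b h1 hb.continuousAt ⟨hx1, by linarith⟩ hxy hyz
    · have h1' := slope_le_slope_b h1 hb.continuousAt ⟨hx1, by linarith⟩ hxy hyb
      have h2' : (f b - f y) / (b - y) ≤ (f z - f b) / (z - b) :=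
        (slope_le_deriv hab h1 hb ⟨by linarith [hx1], hyb⟩).trans
          (deriv_le_slope hbc h2 hb ⟨hbz, hz2⟩)
      exact h1'.trans (slope_trans_left hyb hbz h2')
  · subst hyb
    exact (slope_le_deriv hab h1 hb ⟨hx1, hxy⟩).trans (deriv_le_slope hbc h2 hb ⟨hyz, hz2⟩)
  · rcases lt_trichotomy x b with hxb | hxb | hbx
    · have h2' := slope_b_le_slope h2 hb.continuousAt ⟨by linarith, hz2⟩ hyz hby
      have h1' : (f b - f x) / (b - x) ≤ (f y - f b) / (y - b) :=
        (slope_le_deriv hab h1 hb ⟨hx1, hxb⟩).trans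
          (deriv_le_slope hbc h2 hb ⟨hby, by linarith [hz2]⟩)
      exact (slope_trans_right hxb hby h1').trans h2'
    · subst hxb; exact slope_b_le_slope h2 hb.continuousAt ⟨by linarith, hz2⟩ hyz hby
    · exact h2.slope_mono_adjacent ⟨hbx, by linarith⟩ ⟨by linarith, hz2⟩ hxy hyz
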